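/- Let (X,≼) be a Debreu separable preorder and let I be a finite set. Then (X,≼) has a multi-utility (uᵢ)ᵢ∈I indexed by I if and only if it has a strict monotone multi-utility (vᵢ)ᵢ∈I indexed by I. -/
import Mathlib


/-- A binary relation is a partial order: reflexive, antisymmetric, transitive. -/
def IsPartialOrderRel {X : Type*} (r : X → X → Prop) : Prop :=
  (∀ x, r x x) ∧ (∀ x y, r x y → r y x → x = y) ∧ (∀ x y z, r x y → r y z → r x z)

/-- `r'` extends `r`. -/
def RelExtends {X : Type*} (r r' : X → X → Prop) : Prop :=
  ∀ x y, r x y → r' x y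

/-- `r` is total: any two elements are comparable. -/
def TotalRel {X : Type*} (r : X → X → Prop) : Prop :=
  ∀ x y, r x y ∨ r y x

/-- `r'` is a linear extension of `r`: a total partial order extending `r`. -/
def IsLinearExtension {X : Type*} (r r' : X → X → Prop) : Prop :=
  IsPartialOrderRel r' ∧ TotalRel r' ∧ RelExtends r r'

/-- `x` and `y` are incomparable with respect to `r`. -/
def Incomp {X : Type*} (r : X → X → Prop) (x y : X) : Prop :=
  ¬ r x y ∧ ¬ r y x

/-- `D` is Debreu dense for `r`. -/
def DebreuDense {X : Type*} (r : X → X → Prop) (D : Set X) : Prop :=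
  ∀ x y, r x y → ¬ r y x → ∃ d ∈ D, r x d ∧ r d y

/-- `(X, r)` is Debreu separable: it has a countable Debreu dense subset. -/
def DebreuSeparable {X : Type*} (r : X → X → Prop) : Prop :=
  ∃ D : Set X, D.Countable ∧ DebreuDense r D

/-- The limit of a sequence of binary relations. -/
def LimitRel {X : Type*} (r : ℕ → X → X → Prop) : X → X → Prop :=
  fun x y => ∃ n₀ : ℕ, ∀ n, n₀ ≤ n → r n x y


open Classical in
noncomputable def mySum (P : ℕ → Prop) : ℝ := ∑' n, if P n then (1/2:ℝ)^n else 0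

open Classical in
lemma mySum_summable (P : ℕ → Prop) : Summable (fun n => if P n then (1/2:ℝ)^n else 0) := by
  apply Summable.of_nonneg_of_le (fun n => ?_) (fun n => ?_)
    (summable_geometric_of_lt_one (by norm_num) (by norm_num : (1/2:ℝ) < 1))
  · split_ifs <;> positivity
  · split_ifs with h
    · exact le_refl _
    · positivity

open Classical in
lemma mySum_mono {P Q : ℕ → Prop} (h : ∀ n, P n → Q n) : mySum P ≤ mySum Q := by
  refine Summable.tsum_le_tsum (fun n => ?_) (mySum_summable P) (mySum_summable Q)
  split_ifs with h1 h2
  · exact le_refl _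
  · exact absurd (h n h1) h2
  · positivity
  · exact le_refl _

open Classical in
lemma mySum_lt {P Q : ℕ → Prop} (h : ∀ n, P n → Q n) {m : ℕ} (hm : Q m) (hpm : ¬ P m) :
    mySum P < mySum Q := by
  refine Summable.tsum_lt_tsum (fun n => ?_) (i := m) ?_ (mySum_summable P) (mySum_summable Q)
  · split_ifs with h1 h2
    · exact le_refl _
    · exact absurd (h n h1) h2
    · positivity
    · exact le_refl _
  · simp only [hm, hpm, if_true, if_false]
    positivity


theorem debreuSeparable_finite_multiUtility_iff_strictMonotoneMultiUtility {X : Type*}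
    (r : X → X → Prop)
    (hrefl : ∀ x, r x x) (htrans : ∀ x y z, r x y → r y z → r x z)
    (hsep : DebreuSeparable r) (I : Type*) [Finite I] :
    (∃ u : I → X → ℝ, ∀ x y, r x y ↔ ∀ i, u i x ≤ u i y) ↔
    (∃ v : I → X → ℝ,
      (∀ x y, r x y ↔ ∀ i, v i x ≤ v i y) ∧
      (∀ i, (∀ x y, r x y → v i x ≤ v i y) ∧
            (∀ x y, r x y → ¬ r y x → v i x < v i y))) := by
  constructor
  · rintro ⟨u, hu⟩
    by_cases hX : Nonempty X
    · obtain ⟨x0⟩ := hX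
      obtain ⟨D, hDc, hDd⟩ := hsep
      obtain ⟨f, hf⟩ := (hDc.insert x0).exists_eq_range (Set.insert_nonempty _ _)
      -- monotonicity of each u i
      have humono : ∀ i x y, r x y → u i x ≤ u i y := fun i x y h => (hu x y).mp h i
      set A : I → X → ℕ → Prop := fun i x n =>
        u i (f n) < u i x ∨ (u i (f n) = u i x ∧ r (f n) x) with hA
      set B : I → X → ℕ → Prop := fun i x n =>
        u i x < u i (f n) ∨ (u i (f n) = u i x ∧ r x (f n)) with hB
      set v : I → X → ℝ := fun i x => u i x + mySum (A i x) - mySum (B i x) with hv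
      have hAmono : ∀ i x y, r x y → ∀ n, A i x n → A i y n := by
        intro i x y hxy n hn
        have hle := humono i x y hxy
        rcases hn with h | ⟨heq, hr⟩
        · exact Or.inl (lt_of_lt_of_le h hle)
        · rcases lt_or_eq_of_le hle with h | h
          · exact Or.inl (heq ▸ h)
          · exact Or.inr ⟨heq.trans h, htrans _ _ _ hr hxy⟩
      have hBmono : ∀ i x y, r x y → ∀ n, B i y n → B i x n := by
        intro i x y hxy n hn
        have hle := humono i x y hxy
        rcases hn with h | ⟨heq, hr⟩
        · exact Or.inl (lt_of_le_of_lt hle h)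
        · rcases lt_or_eq_of_le hle with h | h
          · exact Or.inl (h.trans_eq heq.symm)
          · exact Or.inr ⟨heq.trans h.symm, htrans _ _ _ hxy hr⟩
      have hvmono : ∀ i x y, r x y → v i x ≤ v i y := by
        intro i x y hxy
        have h1 := mySum_mono (hAmono i x y hxy)
        have h2 := mySum_mono (hBmono i x y hxy)
        have h3 := humono i x y hxy
        simp only [hv]
        linarith
      have hvrev : ∀ i x y, u i y < u i x → v i y < v i x := by
        intro i x y hlt
        have h1 : mySum (A i y) ≤ mySum (A i x) := by
          refine mySum_mono (fun n hn => ?_)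
          rcases hn with h | ⟨heq, _⟩
          · exact Or.inl (h.trans hlt)
          · exact Or.inl (heq ▸ hlt)
        have h2 : mySum (B i x) ≤ mySum (B i y) := by
          refine mySum_mono (fun n hn => ?_)
          rcases hn with h | ⟨heq, _⟩
          · exact Or.inl (hlt.trans h)
          · exact Or.inl (hlt.trans_eq heq.symm)
        simp only [hv]
        linarith
      have hvstrict : ∀ i x y, r x y → ¬ r y x → v i x < v i y := by
        intro i x y hxy hnyx
        have hle := humono i x y hxy
        have hA1 := mySum_mono (hAmono i x y hxy)
        have hB1 := mySum_mono (hBmono i x y hxy)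
        rcases lt_or_eq_of_le hle with hlt | heq
        · simp only [hv]; linarith
        · obtain ⟨d, hdD, hxd, hdy⟩ := hDd x y hxy hnyx
          have hdmem : d ∈ Set.range f := by rw [← hf]; exact Set.mem_insert_of_mem _ hdD
          obtain ⟨m, hm⟩ := hdmem
          have hud : u i (f m) = u i x := by
            have h1 := humono i x (f m) (hm ▸ hxd)
            have h2 := humono i (f m) y (hm ▸ hdy)
            linarith [heq ▸ h2]
          by_cases hdx : r (f m) x
          · -- then x ≼ f m and ¬ y ≼ f m : B i x m holds, B i y m fails
            have hBx : B i x m := Or.inr ⟨hud, hm ▸ hxd⟩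
            have hBy : ¬ B i y m := by
              rintro (h | ⟨_, hyd⟩)
              · exact absurd (heq ▸ hud) h.ne'
              · exact hnyx (htrans _ _ _ hyd hdx)
            have := mySum_lt (hBmono i x y hxy) hBx hBy
            simp only [hv]
            linarith
          · have hAy : A i y m := Or.inr ⟨hud.trans heq, hm ▸ hdy⟩
            have hAx : ¬ A i x m := by
              rintro (h | ⟨_, hdx'⟩)
              · exact absurd hud h.ne
              · exact hdx hdx'
            have := mySum_lt (hAmono i x y hxy) hAy hAx
            simp only [hv]
            linarith
      refine ⟨v, fun x y => ⟨fun h i => hvmono i x y h, fun h => ?_⟩,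
        fun i => ⟨fun x y h => hvmono i x y h, fun x y h h' => hvstrict i x y h h'⟩⟩
      by_contra hnxy
      have : ¬ ∀ i, u i x ≤ u i y := fun h' => hnxy ((hu x y).mpr h')
      push_neg at this
      obtain ⟨i, hi⟩ := this
      exact absurd (h i) (not_le.mpr (hvrev i x y hi))
    · exact ⟨fun _ _ => 0, fun x y => (hX ⟨x⟩).elim,
        fun i => ⟨fun x y => (hX ⟨x⟩).elim, fun x y => (hX ⟨x⟩).elim⟩⟩
  · rintro ⟨v, hv, _⟩
    exact ⟨v, hv⟩
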